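/- arXiv:1606.04912 — 4 statements merged into one kernel-verified Lean document; each statement's English description precedes it below -/
import Mathlib

section
/- Let a < b be real numbers and 0 < sigma < 1. If w : [a,b] → ℝ is absolutely continuous with derivative w' in L^1(a,b) and w(a) = 0, then differentiation commutes with the left fractional integral: for almost every x in (a,b), the function y ↦ (I_{a+}^sigma w)(y) is differentiable at x with derivative equal to (I_{a+}^sigma w')(x); in particular (I_{a+}^sigma w)(x) = (1/Gamma(sigma+1)) ∫_a^x (x-s)^{sigma} w'(s) ds for every x in [a,b]. -/
open MeasureTheory Real Set Filter Metric Topology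

section Helpers

/-- a.e. version of FTC: the indefinite integral of an integrable function is a.e.
differentiable with derivative the function itself (Lebesgue differentiation theorem). -/
lemma ae_hasDerivAt_intervalIntegral {g₀ : ℝ → ℝ} (hg₀ : Integrable g₀ volume) (a : ℝ) :
    ∀ᵐ x ∂(volume : Measure ℝ), HasDerivAt (fun y => ∫ t in a..y, g₀ t) (g₀ x) x := by
  have hloc : LocallyIntegrable g₀ volume := hg₀.locallyIntegrable
  filter_upwards [IsUnifLocDoublingMeasure.ae_tendsto_average_norm_sub (μ := volume) hloc 1]
    with x hx
  rw [hasDerivAt_iff_tendsto_slope]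
  have hδ : Tendsto (fun y : ℝ => |y - x| / 2) (𝓝[≠] x) (𝓝[>] 0) := by
    rw [tendsto_nhdsWithin_iff]
    constructor
    · have hc : Continuous fun y : ℝ => |y - x| / 2 :=
        (continuous_id.sub continuous_const).abs.div_const 2
      simpa using (hc.tendsto x).mono_left nhdsWithin_le_nhds
    · filter_upwards [self_mem_nhdsWithin] with y hy
      have : y - x ≠ 0 := sub_ne_zero.2 hy
      have := abs_pos.2 this
      exact mem_Ioi.2 (by linarith)
  have hmem : ∀ᶠ y in 𝓝[≠] x, x ∈ closedBall ((x + y) / 2) (1 * (|y - x| / 2)) := by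
    filter_upwards with y
    rw [mem_closedBall, Real.dist_eq]
    have : x - (x + y) / 2 = (x - y) / 2 := by ring
    rw [this, abs_div, abs_sub_comm x y]
    simp
  have key := hx (fun y => (x + y) / 2) (fun y => |y - x| / 2) hδ hmem
  rw [← tendsto_sub_nhds_zero_iff]
  apply squeeze_zero_norm' _ key
  filter_upwards [self_mem_nhdsWithin] with y (hy : y ≠ x)
  have hyx : y - x ≠ 0 := sub_ne_zero.2 hy
  have hint : IntervalIntegrable g₀ volume x y := hg₀.intervalIntegrable
  have hF : (∫ t in a..y, g₀ t) - ∫ t in a..x, g₀ t = ∫ t in x..y, g₀ t :=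
    intervalIntegral.integral_interval_sub_left hg₀.intervalIntegrable hg₀.intervalIntegrable
  have hconst : IntervalIntegrable (fun _ : ℝ => g₀ x) volume x y := intervalIntegrable_const
  have hslope : slope (fun y => ∫ t in a..y, g₀ t) x y - g₀ x
      = (y - x)⁻¹ * ∫ t in x..y, (g₀ t - g₀ x) := by
    rw [intervalIntegral.integral_sub hint hconst]
    rw [slope_def_field, div_eq_inv_mul, hF, intervalIntegral.integral_const, smul_eq_mul]
    field_simp
  rw [hslope]
  have hball : uIoc x y ⊆ closedBall ((x + y) / 2) (|y - x| / 2) := by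
    rw [Real.closedBall_eq_Icc]
    rcases le_total x y with h | h
    · rw [uIoc_of_le h, abs_of_nonneg (by linarith : (0:ℝ) ≤ y - x)]
      have e1 : (x + y) / 2 - (y - x) / 2 = x := by ring
      have e2 : (x + y) / 2 + (y - x) / 2 = y := by ring
      rw [e1, e2]; exact Ioc_subset_Icc_self
    · rw [uIoc_of_ge h, abs_of_nonpos (by linarith : y - x ≤ 0)]
      have e1 : (x + y) / 2 - -(y - x) / 2 = y := by ring
      have e2 : (x + y) / 2 + -(y - x) / 2 = x := by ring
      rw [e1, e2]; exact Ioc_subset_Icc_self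
  have hIntBall : IntegrableOn (fun t => ‖g₀ t - g₀ x‖)
      (closedBall ((x + y) / 2) (|y - x| / 2)) volume := by
    refine ((hg₀.integrableOn.sub ?_).norm)
    exact integrableOn_const measure_closedBall_lt_top.ne enorm_ne_top
  have h1 : ‖∫ t in x..y, (g₀ t - g₀ x)‖
      ≤ ∫ t in closedBall ((x + y) / 2) (|y - x| / 2), ‖g₀ t - g₀ x‖ := by
    refine le_trans intervalIntegral.norm_integral_le_integral_norm_uIoc ?_
    exact setIntegral_mono_set hIntBall (Eventually.of_forall fun t => norm_nonneg _)
      (HasSubset.Subset.eventuallyLE hball)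
  have hvol : (volume (closedBall ((x + y) / 2) (|y - x| / 2))).toReal = |y - x| := by
    rw [Real.volume_closedBall, ENNReal.toReal_ofReal (by positivity)]
    ring
  calc ‖(y - x)⁻¹ * ∫ t in x..y, (g₀ t - g₀ x)‖
      = |y - x|⁻¹ * ‖∫ t in x..y, (g₀ t - g₀ x)‖ := by
        rw [norm_mul, norm_inv, Real.norm_eq_abs]
    _ ≤ |y - x|⁻¹ * ∫ t in closedBall ((x + y) / 2) (|y - x| / 2), ‖g₀ t - g₀ x‖ := by
        exact mul_le_mul_of_nonneg_left h1 (by positivity)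
    _ = ⨍ t in closedBall ((x + y) / 2) (|y - x| / 2), ‖g₀ t - g₀ x‖ := by
        rw [setAverage_eq, measureReal_def, hvol, smul_eq_mul]

lemma kernel_int₁ {σ t x : ℝ} (hσ : 0 < σ) (htx : t ≤ x) :
    ∫ s in Ioc t x, (x - s) ^ (σ - 1) = (x - t) ^ σ / σ := by
  rw [← intervalIntegral.integral_of_le htx,
    intervalIntegral.integral_comp_sub_left (fun u => u ^ (σ - 1)) x]
  rw [sub_self, integral_rpow (Or.inl (by linarith))]
  rw [sub_add_cancel, Real.zero_rpow hσ.ne']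
  ring

lemma kernel_int₂ {σ t x : ℝ} (hσ : 0 < σ) (htx : t ≤ x) :
    ∫ s in Ioc t x, (s - t) ^ (σ - 1) = (x - t) ^ σ / σ := by
  rw [← intervalIntegral.integral_of_le htx,
    intervalIntegral.integral_comp_sub_right (fun u => u ^ (σ - 1)) t]
  rw [sub_self, integral_rpow (Or.inl (by linarith))]
  rw [sub_add_cancel, Real.zero_rpow hσ.ne']
  ring

lemma inner_eq {a x : ℝ} (K : ℝ → ℝ → ℝ) (g : ℝ → ℝ) {s : ℝ} (hs : s ∈ Ioc a x) :
    ∫ t, ({p : ℝ × ℝ | p.2 ≤ p.1}.indicator (fun p => K p.1 p.2 * g p.2)) (s, t)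
        ∂(volume.restrict (Ioc a x))
      = ∫ t in Ioc a s, K s t * g t := by
  have h1 : (fun t => ({p : ℝ × ℝ | p.2 ≤ p.1}.indicator (fun p => K p.1 p.2 * g p.2)) (s, t))
      = (Iic s).indicator (fun t => K s t * g t) := by
    funext t; by_cases h : t ≤ s <;> simp [Set.indicator, h]
  have h2 : Iic s ∩ Ioc a x = Ioc a s := by
    ext t
    simp only [mem_inter_iff, mem_Iic, mem_Ioc]
    exact ⟨fun h => ⟨h.2.1, h.1⟩, fun h => ⟨h.2, h.1, h.2.trans hs.2⟩⟩
  rw [h1, integral_indicator measurableSet_Iic, Measure.restrict_restrict measurableSet_Iic, h2]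

/-- Fubini on the triangle `{a < t ≤ s ≤ x}`. -/
lemma swap_tri {a x : ℝ} (K : ℝ → ℝ → ℝ) (g : ℝ → ℝ)
    (hH : Integrable (fun q : ℝ × ℝ => {p : ℝ × ℝ | p.2 ≤ p.1}.indicator
        (fun p => K p.1 p.2 * g p.2) q)
      ((volume.restrict (Ioc a x)).prod (volume.restrict (Ioc a x)))) :
    ∫ s in Ioc a x, ∫ t in Ioc a s, K s t * g t
      = ∫ t in Ioc a x, (∫ s in Ioc t x, K s t) * g t := by
  have key := MeasureTheory.integral_integral_swap
    (f := fun s t => ({p : ℝ × ℝ | p.2 ≤ p.1}.indicator (fun p => K p.1 p.2 * g p.2)) (s, t))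
    (μ := volume.restrict (Ioc a x)) (ν := volume.restrict (Ioc a x)) hH
  have hL : ∫ s in Ioc a x, ∫ t, ({p : ℝ × ℝ | p.2 ≤ p.1}.indicator
        (fun p => K p.1 p.2 * g p.2)) (s, t) ∂(volume.restrict (Ioc a x))
      = ∫ s in Ioc a x, ∫ t in Ioc a s, K s t * g t :=
    setIntegral_congr_fun measurableSet_Ioc fun s hs => inner_eq K g hs
  have hR : ∫ t in Ioc a x, ∫ s, ({p : ℝ × ℝ | p.2 ≤ p.1}.indicator
        (fun p => K p.1 p.2 * g p.2)) (s, t) ∂(volume.restrict (Ioc a x))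
      = ∫ t in Ioc a x, (∫ s in Ioc t x, K s t) * g t := by
    refine setIntegral_congr_fun measurableSet_Ioc fun t ht => ?_
    have h1 : (fun s => ({p : ℝ × ℝ | p.2 ≤ p.1}.indicator (fun p => K p.1 p.2 * g p.2)) (s, t))
        = (Ici t).indicator (fun s => K s t * g t) := by
      funext s; by_cases h : t ≤ s <;> simp [Set.indicator, h]
    rw [h1, integral_indicator measurableSet_Ici, Measure.restrict_restrict measurableSet_Ici]
    have h2 : Ici t ∩ Ioc a x = Icc t x := by
      ext s
      simp only [mem_inter_iff, mem_Ici, mem_Ioc, mem_Icc]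
      exact ⟨fun h => ⟨h.1, h.2.2⟩, fun h => ⟨h.1, ht.1.trans_le h.1, h.2⟩⟩
    rw [h2, integral_Icc_eq_integral_Ioc, ← integral_mul_const]
  rw [← hL, key, hR]

/-- Integrability of the triangle kernel function on the product space. -/
lemma integH {a x C : ℝ} {g : ℝ → ℝ}
    (hgm : Measurable g) (hg : IntegrableOn g (Ioc a x)) {K : ℝ → ℝ → ℝ}
    (hKm : Measurable fun p : ℝ × ℝ => K p.1 p.2)
    (hKi : ∀ t ∈ Ioc a x, IntervalIntegrable (fun s => K s t) volume t x)
    (hKnorm : ∀ t ∈ Ioc a x, (∫ s in Ioc t x, |K s t|) ≤ C) :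
    Integrable (fun q : ℝ × ℝ => {p : ℝ × ℝ | p.2 ≤ p.1}.indicator
        (fun p => K p.1 p.2 * g p.2) q)
      ((volume.restrict (Ioc a x)).prod (volume.restrict (Ioc a x))) := by
  have hAmeas : MeasurableSet {p : ℝ × ℝ | p.2 ≤ p.1} :=
    measurableSet_le measurable_snd measurable_fst
  have hfm : Measurable fun q : ℝ × ℝ => {p : ℝ × ℝ | p.2 ≤ p.1}.indicator
      (fun p => K p.1 p.2 * g p.2) q :=
    (hKm.mul (hgm.comp measurable_snd)).indicator hAmeas
  rw [integrable_prod_iff' hfm.aestronglyMeasurable]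
  constructor
  · filter_upwards [ae_restrict_mem measurableSet_Ioc] with t ht
    have h1 : (fun s => {p : ℝ × ℝ | p.2 ≤ p.1}.indicator (fun p => K p.1 p.2 * g p.2) (s, t))
        = (Ici t).indicator (fun s => K s t * g t) := by
      funext s; by_cases h : t ≤ s <;> simp [Set.indicator, h]
    rw [h1, integrable_indicator_iff measurableSet_Ici]
    have h2 : Ici t ∩ Ioc a x = Icc t x := by
      ext s
      simp only [mem_inter_iff, mem_Ici, mem_Ioc, mem_Icc]
      exact ⟨fun h => ⟨h.1, h.2.2⟩, fun h => ⟨h.1, ht.1.trans_le h.1, h.2⟩⟩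
    unfold IntegrableOn
    rw [Measure.restrict_restrict measurableSet_Ici, h2]
    exact (intervalIntegrable_iff_integrableOn_Icc_of_le ht.2).mp ((hKi t ht).mul_const (g t))
  · apply Integrable.mono' ((hg.abs).mul_const C)
    · exact ((hfm.norm.stronglyMeasurable).integral_prod_left').aestronglyMeasurable
    · filter_upwards [ae_restrict_mem measurableSet_Ioc] with t ht
      have h1 : (fun s => ‖{p : ℝ × ℝ | p.2 ≤ p.1}.indicator (fun p => K p.1 p.2 * g p.2) (s, t)‖)
          = (Ici t).indicator (fun s => |K s t| * |g t|) := by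
        funext s
        by_cases h : t ≤ s <;> simp [Set.indicator, h, abs_mul]
      have h2 : Ici t ∩ Ioc a x = Icc t x := by
        ext s
        simp only [mem_inter_iff, mem_Ici, mem_Ioc, mem_Icc]
        exact ⟨fun h => ⟨h.1, h.2.2⟩, fun h => ⟨h.1, ht.1.trans_le h.1, h.2⟩⟩
      rw [Real.norm_eq_abs, abs_of_nonneg (integral_nonneg fun s => norm_nonneg _)]
      calc ∫ s, ‖{p : ℝ × ℝ | p.2 ≤ p.1}.indicator (fun p => K p.1 p.2 * g p.2) (s, t)‖
              ∂(volume.restrict (Ioc a x))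
          = ∫ s in Icc t x, |K s t| * |g t| := by
            rw [h1, integral_indicator measurableSet_Ici,
              Measure.restrict_restrict measurableSet_Ici, h2]
        _ = (∫ s in Ioc t x, |K s t|) * |g t| := by
            rw [integral_Icc_eq_integral_Ioc, integral_mul_const]
        _ ≤ C * |g t| := mul_le_mul_of_nonneg_right (hKnorm t ht) (abs_nonneg _)
        _ = |g t| * C := mul_comm _ _

lemma ae_Ioc_of_ae_Ioo {a b x : ℝ} (hx : x ≤ b) {p : ℝ → Prop}
    (h : ∀ᵐ t ∂(volume.restrict (Ioo a b)), p t) :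
    ∀ᵐ t ∂(volume.restrict (Ioc a x)), p t := by
  have h1 : ∀ᵐ t ∂(volume.restrict (Ioo a x)), p t :=
    ae_restrict_of_ae_restrict_of_subset (Ioo_subset_Ioo le_rfl hx) h
  rwa [Measure.restrict_congr_set Ioo_ae_eq_Ioc] at h1

end Helpers

/-- Left Riemann–Liouville fractional integral of order `σ` with base point `a`. -/
noncomputable def Il (a σ : ℝ) (w : ℝ → ℝ) (x : ℝ) : ℝ :=
  (1 / Real.Gamma σ) * ∫ s in a..x, (x - s) ^ (σ - 1) * w s

/-- If `w` is absolutely continuous on `[a,b]` with derivative `w' ∈ L¹(a,b)` and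
`w(a) = 0`, then differentiation commutes with the left fractional integral:
`D (I_{a+}^σ w) = I_{a+}^σ w'` a.e. on `(a,b)`; in particular
`(I_{a+}^σ w)(x) = (1/Γ(σ+1)) ∫_a^x (x-s)^σ w'(s) ds` on `[a,b]`. -/
theorem deriv_comm_left_fractional_integral (a b σ : ℝ) (hab : a < b)
    (hσ0 : 0 < σ) (hσ1 : σ < 1) (w w' : ℝ → ℝ)
    (hw' : IntegrableOn w' (Ioo a b))
    (hAC : ∀ x ∈ Icc a b, w x = w a + ∫ s in a..x, w' s)
    (hwa : w a = 0) :
    (∀ᵐ x ∂(volume.restrict (Ioo a b)),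
        HasDerivAt (fun y => Il a σ w y) (Il a σ w' x) x) ∧
    ∀ x ∈ Icc a b,
      Il a σ w x = (1 / Real.Gamma (σ + 1)) * ∫ s in a..x, (x - s) ^ σ * w' s := by
  -- measurable representative of `w'`
  have hsm : StronglyMeasurable (hw'.1.mk w') := hw'.1.stronglyMeasurable_mk
  have hae : w' =ᵐ[volume.restrict (Ioo a b)] hw'.1.mk w' := hw'.1.ae_eq_mk
  set v : ℝ → ℝ := hw'.1.mk w' with hvdef
  have hvm : Measurable v := hsm.measurable
  have hvi : IntegrableOn v (Ioo a b) := hw'.congr hae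
  have hΓ : (0:ℝ) < Real.Gamma σ := Real.Gamma_pos_of_pos hσ0
  have haeIoc : ∀ {x : ℝ}, x ≤ b → w' =ᵐ[volume.restrict (Ioc a x)] v :=
    fun {x} hx => ae_Ioc_of_ae_Ioo hx hae
  have hvIoc : ∀ x ≤ b, IntegrableOn v (Ioc a x) := by
    intro x hx
    have h1 : IntegrableOn v (Ioo a x) := hvi.mono_set (Ioo_subset_Ioo le_rfl hx)
    unfold IntegrableOn at h1 ⊢
    rwa [← Measure.restrict_congr_set Ioo_ae_eq_Ioc]
  have hwint : ∀ x ∈ Icc a b, w x = ∫ t in Ioc a x, v t := by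
    intro x hx
    rw [hAC x hx, hwa, zero_add, intervalIntegral.integral_of_le hx.1]
    exact integral_congr_ae (haeIoc hx.2)
  -- integrability of the two triangle kernels
  have hH1 : ∀ x ∈ Icc a b, Integrable (fun q : ℝ × ℝ => {p : ℝ × ℝ | p.2 ≤ p.1}.indicator
      (fun p => (x - p.1) ^ (σ - 1) * v p.2) q)
      ((volume.restrict (Ioc a x)).prod (volume.restrict (Ioc a x))) := by
    intro x hx
    refine integH (C := (x - a) ^ σ / σ) (K := fun s _ => (x - s) ^ (σ - 1)) hvm (hvIoc x hx.2)
      (by fun_prop) ?_ ?_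
    · intro t ht
      have h := (intervalIntegral.intervalIntegrable_rpow' (by linarith : (-1:ℝ) < σ - 1)
        (a := x - t) (b := x - x)).comp_sub_left x
      simpa using h
    · intro t ht
      have habs : ∀ s ∈ Ioc t x, |(x - s) ^ (σ - 1)| = (x - s) ^ (σ - 1) := fun s hs =>
        abs_of_nonneg (Real.rpow_nonneg (by linarith [hs.2]) _)
      rw [setIntegral_congr_fun measurableSet_Ioc habs, kernel_int₁ hσ0 ht.2]
      gcongr
      · exact sub_nonneg.2 ht.2
      · linarith [ht.1]
  have hH2 : ∀ x ∈ Icc a b, Integrable (fun q : ℝ × ℝ => {p : ℝ × ℝ | p.2 ≤ p.1}.indicator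
      (fun p => (p.1 - p.2) ^ (σ - 1) * v p.2) q)
      ((volume.restrict (Ioc a x)).prod (volume.restrict (Ioc a x))) := by
    intro x hx
    refine integH (C := (x - a) ^ σ / σ) (K := fun s t => (s - t) ^ (σ - 1)) hvm (hvIoc x hx.2)
      (by fun_prop) ?_ ?_
    · intro t ht
      have h := (intervalIntegral.intervalIntegrable_rpow' (by linarith : (-1:ℝ) < σ - 1)
        (a := t - t) (b := x - t)).comp_sub_right t
      simpa using h
    · intro t ht
      have habs : ∀ s ∈ Ioc t x, |(s - t) ^ (σ - 1)| = (s - t) ^ (σ - 1) := fun s hs =>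
        abs_of_nonneg (Real.rpow_nonneg (by linarith [hs.1]) _)
      rw [setIntegral_congr_fun measurableSet_Ioc habs, kernel_int₂ hσ0 ht.2]
      gcongr
      · exact sub_nonneg.2 ht.2
      · linarith [ht.1]
  -- the core identity
  have hA : ∀ x ∈ Icc a b, ∫ s in Ioc a x, (x - s) ^ (σ - 1) * w s
      = ∫ t in Ioc a x, ((x - t) ^ σ / σ) * v t := by
    intro x hx
    calc ∫ s in Ioc a x, (x - s) ^ (σ - 1) * w s
        = ∫ s in Ioc a x, ∫ t in Ioc a s, (x - s) ^ (σ - 1) * v t := by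
          refine setIntegral_congr_fun measurableSet_Ioc fun s hs => ?_
          rw [hwint s ⟨hs.1.le, hs.2.trans hx.2⟩, integral_const_mul]
      _ = ∫ t in Ioc a x, (∫ s in Ioc t x, (x - s) ^ (σ - 1)) * v t :=
          swap_tri (fun s _ => (x - s) ^ (σ - 1)) v (hH1 x hx)
      _ = ∫ t in Ioc a x, ((x - t) ^ σ / σ) * v t := by
          refine setIntegral_congr_fun measurableSet_Ioc fun t ht => ?_
          rw [kernel_int₁ hσ0 ht.2]
  have hIlJ : ∀ x ∈ Icc a b,
      Il a σ w x = (1 / Real.Gamma σ) * ∫ t in Ioc a x, ((x - t) ^ σ / σ) * v t := by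
    intro x hx
    rw [Il, intervalIntegral.integral_of_le hx.1, hA x hx]
  -- part 2
  have hP2 : ∀ x ∈ Icc a b,
      Il a σ w x = (1 / Real.Gamma (σ + 1)) * ∫ s in a..x, (x - s) ^ σ * w' s := by
    intro x hx
    rw [hIlJ x hx, intervalIntegral.integral_of_le hx.1]
    have hcongr : ∫ s in Ioc a x, (x - s) ^ σ * w' s = ∫ s in Ioc a x, (x - s) ^ σ * v s :=
      integral_congr_ae ((haeIoc hx.2).mono fun t ht => by simp only [ht])
    rw [hcongr, Real.Gamma_add_one hσ0.ne']
    have h3 : ∫ t in Ioc a x, ((x - t) ^ σ / σ) * v t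
        = (1 / σ) * ∫ t in Ioc a x, (x - t) ^ σ * v t := by
      rw [← integral_const_mul]
      exact setIntegral_congr_fun measurableSet_Ioc fun t _ => by ring
    rw [h3, one_div, one_div, one_div, mul_inv]
    ring
  refine ⟨?_, hP2⟩
  -- part 1
  have hHb := hH2 b ⟨hab.le, le_rfl⟩
  set G₁ : ℝ → ℝ := fun y => ∫ t, ({p : ℝ × ℝ | p.2 ≤ p.1}.indicator
      (fun p => (p.1 - p.2) ^ (σ - 1) * v p.2)) (y, t) ∂(volume.restrict (Ioc a b)) with hG₁def
  have hG₁int : Integrable G₁ (volume.restrict (Ioc a b)) := by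
    simp only [hG₁def]
    exact hHb.integral_prod_left
  have hG₁eq : ∀ y ∈ Ioc a b, G₁ y = ∫ t in Ioc a y, (y - t) ^ (σ - 1) * v t := by
    intro y hy
    simp only [hG₁def]
    exact inner_eq (fun s t => (s - t) ^ (σ - 1)) v hy
  set g₀ : ℝ → ℝ := (Ioo a b).indicator (fun y => (1 / Real.Gamma σ) * G₁ y) with hg₀def
  have hg₀i : Integrable g₀ volume := by
    rw [hg₀def, integrable_indicator_iff measurableSet_Ioo]
    exact ((show IntegrableOn G₁ (Ioc a b) volume from hG₁int).mono_set Ioo_subset_Ioc_self).const_mul _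
  have hg₀G : ∀ x ∈ Ioo a b, g₀ x = Il a σ w' x := by
    intro x hx
    rw [hg₀def, indicator_of_mem hx, hG₁eq x ⟨hx.1, hx.2.le⟩, Il,
      intervalIntegral.integral_of_le hx.1.le]
    congr 1
    exact (integral_congr_ae ((haeIoc hx.2.le).mono fun t ht => by simp only [ht])).symm
  have hF₀ : ∀ x ∈ Icc a b, (∫ t in a..x, g₀ t) = Il a σ w x := by
    intro x hx
    rw [intervalIntegral.integral_of_le hx.1]
    have hsets : (Ioc a x ∩ Ioo a b : Set ℝ) =ᵐ[volume] (Ioc a x : Set ℝ) := by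
      rw [ae_eq_set]
      constructor
      · have he : (Ioc a x ∩ Ioo a b) \ Ioc a x = ∅ := by
          rw [diff_eq_empty]; exact inter_subset_left
        rw [he]; exact measure_empty
      · refine measure_mono_null ?_ (volume_singleton (a := x))
        rintro t ⟨ht, hnt⟩
        have hb : ¬ t < b := fun hlt => hnt ⟨ht, ht.1, hlt⟩
        exact mem_singleton_iff.2 (le_antisymm ht.2 (hx.2.trans (not_lt.1 hb)))
    calc ∫ t in Ioc a x, g₀ t
        = ∫ t in Ioc a x, (Ioo a b).indicator (fun y => (1 / Real.Gamma σ) * G₁ y) t := by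
          rw [hg₀def]
      _ = ∫ t in Ioc a x ∩ Ioo a b, (1 / Real.Gamma σ) * G₁ t := by
          rw [setIntegral_indicator measurableSet_Ioo]
      _ = ∫ t in Ioc a x, (1 / Real.Gamma σ) * G₁ t := by
          rw [Measure.restrict_congr_set hsets]
      _ = (1 / Real.Gamma σ) * ∫ s in Ioc a x, G₁ s := integral_const_mul _ _
      _ = (1 / Real.Gamma σ) * ∫ s in Ioc a x, ∫ t in Ioc a s, (s - t) ^ (σ - 1) * v t := by
          congr 1
          exact setIntegral_congr_fun measurableSet_Ioc fun s hs =>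
            hG₁eq s ⟨hs.1, hs.2.trans hx.2⟩
      _ = (1 / Real.Gamma σ) * ∫ t in Ioc a x, (∫ s in Ioc t x, (s - t) ^ (σ - 1)) * v t := by
          rw [swap_tri (fun s t => (s - t) ^ (σ - 1)) v (hH2 x hx)]
      _ = (1 / Real.Gamma σ) * ∫ t in Ioc a x, ((x - t) ^ σ / σ) * v t := by
          congr 1
          exact setIntegral_congr_fun measurableSet_Ioc fun t ht => by rw [kernel_int₂ hσ0 ht.2]
      _ = Il a σ w x := (hIlJ x hx).symm
  have hder := ae_hasDerivAt_intervalIntegral hg₀i a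
  filter_upwards [ae_restrict_of_ae hder, ae_restrict_mem measurableSet_Ioo] with x hd hx
  have h1 : HasDerivAt (fun y => ∫ t in a..y, g₀ t) (Il a σ w' x) x := by
    rw [← hg₀G x hx]; exact hd
  refine h1.congr_of_eventuallyEq ?_
  filter_upwards [isOpen_Ioo.mem_nhds hx] with y hy
  exact (hF₀ y ⟨hy.1.le, hy.2.le⟩).symm
end

section
/- Let a < b be real numbers and 0 < sigma < 1. If w : [a,b] → ℝ is absolutely continuous with derivative w' in L^1(a,b) and w(b) = 0, then differentiation commutes with the right fractional integral: for almost every x in (a,b), the function y ↦ (I_{b-}^sigma w)(y) is differentiable at x with derivative equal to (I_{b-}^sigma w')(x). -/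
open MeasureTheory Real Set

/-- Right Riemann–Liouville fractional integral of order `σ` with base point `b`. -/
noncomputable def Ir (b σ : ℝ) (w : ℝ → ℝ) (x : ℝ) : ℝ :=
  (1 / Real.Gamma σ) * ∫ s in x..b, (s - x) ^ (σ - 1) * w s

open Filter Metric
open scoped Topology

lemma ae_hasDerivAt_primitive (a : ℝ) (f : ℝ → ℝ) (hf : Integrable f) :
    ∀ᵐ x, HasDerivAt (fun y => ∫ t in a..y, f t) (f x) x := by
  filter_upwards [IsUnifLocDoublingMeasure.ae_tendsto_average_norm_sub
    (μ := (volume : Measure ℝ)) hf.locallyIntegrable 1] with x hx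
  have hδ : Tendsto (fun y : ℝ => |y - x|) (𝓝[≠] x) (𝓝[>] 0) := by
    apply tendsto_nhdsWithin_iff.2 ⟨?_, ?_⟩
    · exact (tendsto_iff_norm_sub_tendsto_zero.1 tendsto_id).mono_left nhdsWithin_le_nhds
    · filter_upwards [self_mem_nhdsWithin] with y hy
      exact abs_pos.2 (sub_ne_zero.2 hy)
  have hmem : ∀ᶠ y in 𝓝[≠] x, x ∈ closedBall x (1 * |y - x|) := by
    filter_upwards [self_mem_nhdsWithin] with y hy
    simpa using abs_nonneg (y - x)
  have hlim := hx (fun _ => x) (fun y => |y - x|) hδ hmem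
  rw [hasDerivAt_iff_tendsto_slope, ← tendsto_sub_nhds_zero_iff]
  have hbound : ∀ᶠ y in 𝓝[≠] x, ‖slope (fun y => ∫ t in a..y, f t) x y - f x‖
      ≤ 2 * ⨍ t in closedBall x |y - x|, ‖f t - f x‖ := by
    filter_upwards [self_mem_nhdsWithin] with y (hy : y ≠ x)
    have hyx : y - x ≠ 0 := sub_ne_zero.2 hy
    have h1 : (∫ t in a..y, f t) - ∫ t in a..x, f t = ∫ t in x..y, f t :=
      intervalIntegral.integral_interval_sub_left hf.intervalIntegrable hf.intervalIntegrable
    have h2 : slope (fun y => ∫ t in a..y, f t) x y - f x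
        = (∫ t in x..y, (f t - f x)) / (y - x) := by
      rw [slope_def_field, div_sub' hyx, h1]
      congr 1
      rw [intervalIntegral.integral_sub hf.intervalIntegrable
        ((intervalIntegrable_const_iff (by finiteness)).2 (Or.inr measure_Ioc_lt_top))]
      simp [mul_comm]
    rw [h2]
    have h3 : ‖∫ t in x..y, (f t - f x)‖ ≤ ∫ t in closedBall x |y - x|, ‖f t - f x‖ := by
      refine (intervalIntegral.norm_integral_le_integral_norm_uIoc).trans ?_
      apply setIntegral_mono_set
      · refine (hf.integrableOn.sub (integrableOn_const (lt_top_iff_ne_top.1 ?_))).norm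
        rw [Real.volume_closedBall]; exact ENNReal.ofReal_lt_top
      · exact Eventually.of_forall fun t => norm_nonneg _
      · refine HasSubset.Subset.eventuallyLE fun t ht => ?_
        rcases le_total x y with h | h
        · rw [uIoc_of_le h] at ht
          simp only [mem_closedBall, Real.dist_eq]
          rw [abs_of_nonneg (le_of_lt (sub_pos.2 ht.1)), abs_of_nonneg (sub_nonneg.2 h)]
          linarith [ht.2]
        · rw [uIoc_of_ge h] at ht
          simp only [mem_closedBall, Real.dist_eq]
          rw [abs_of_nonpos (by linarith [ht.2] : t - x ≤ 0), abs_of_nonpos (sub_nonpos.2 h)]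
          linarith [ht.1]
    have h4 : ∫ t in closedBall x |y - x|, ‖f t - f x‖
        = (2 * |y - x|) * ⨍ t in closedBall x |y - x|, ‖f t - f x‖ := by
      rw [setAverage_eq, smul_eq_mul, Real.volume_real_closedBall
        (by positivity)]
      rw [← mul_assoc, mul_inv_cancel₀ (by positivity), one_mul]
    rw [norm_div, Real.norm_eq_abs (y - x)]
    have habs : (0:ℝ) < |y - x| := abs_pos.2 hyx
    calc ‖∫ t in x..y, (f t - f x)‖ / |y - x|
        ≤ (∫ t in closedBall x |y - x|, ‖f t - f x‖) / |y - x| := by gcongr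
      _ = 2 * ⨍ t in closedBall x |y - x|, ‖f t - f x‖ := by
          rw [h4]; field_simp
  exact squeeze_zero_norm' hbound (by simpa using hlim.const_mul 2)

lemma fubini_kernel (y b : ℝ) (g : ℝ → ℝ) (hg : Integrable g)
    (κ : ℝ → ℝ → ℝ) (hκm : Measurable (Function.uncurry κ))
    (hκ0 : ∀ u t, y < u → u < t → 0 ≤ κ u t)
    (hsec : ∀ t ∈ Ioo y b, IntegrableOn (fun u => κ u t) (Ioo y t))
    (C : ℝ) (hC : 0 ≤ C) (hbound : ∀ t ∈ Ioo y b, (∫ u in Ioo y t, κ u t) ≤ C) :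
    IntegrableOn (fun u => ∫ t in Ioo u b, κ u t * g t) (Ioo y b) ∧
    (∫ u in Ioo y b, ∫ t in Ioo u b, κ u t * g t) =
      ∫ t in Ioo y b, (∫ u in Ioo y t, κ u t) * g t := by
  set f : ℝ × ℝ → ℝ := fun p => κ p.1 p.2 * (Ioo p.1 b).indicator g p.2 with hf
  set μ : Measure ℝ := volume.restrict (Ioo y b) with hμ
  have hIoo_inter : ∀ t ∈ Ioo y b, Iio t ∩ Ioo y b = Ioo y t := by
    intro t ht
    ext u
    simp only [mem_inter_iff, mem_Iio, mem_Ioo]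
    exact ⟨fun h => ⟨h.2.1, h.1⟩, fun h => ⟨h.2, h.1, h.2.trans ht.2⟩⟩
  -- a.e. strong measurability of f on the product
  have hS : MeasurableSet {p : ℝ × ℝ | p.1 < p.2 ∧ p.2 < b} :=
    (measurableSet_lt measurable_fst measurable_snd).inter
      (measurableSet_lt measurable_snd measurable_const)
  have hfeq : f = {p : ℝ × ℝ | p.1 < p.2 ∧ p.2 < b}.indicator
      (fun p => κ p.1 p.2 * g p.2) := by
    funext p
    simp only [hf, indicator_apply, mem_setOf_eq, mem_Ioo]
    by_cases h : p.1 < p.2 ∧ p.2 < b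
    · simp [h]
    · simp [h]
  have hfm : AEStronglyMeasurable f (μ.prod volume) := by
    have h1 : AEStronglyMeasurable f (volume.prod (volume : Measure ℝ)) := by
      rw [hfeq]
      exact ((hκm.aestronglyMeasurable).mul hg.1.comp_snd).indicator hS
    have h2 : μ.prod (volume : Measure ℝ)
        = (volume.prod (volume : Measure ℝ)).restrict (Ioo y b ×ˢ univ) := by
      rw [hμ, ← Measure.prod_restrict, Measure.restrict_univ]
    rw [h2]
    exact h1.restrict
  -- sections
  have hsec' : ∀ t, Integrable (fun u => f (u, t)) μ := by
    intro t
    by_cases ht : t ∈ Ioo y b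
    · have heq : ∀ᵐ u ∂μ, (Iio t).indicator (fun u => κ u t * g t) u = f (u, t) := by
        filter_upwards [ae_restrict_mem measurableSet_Ioo] with u hu
        simp only [hf, indicator_apply, mem_Iio, mem_Ioo]
        by_cases h : u < t
        · simp [h, ht.2]
        · simp [h]
      refine Integrable.congr ?_ heq
      rw [hμ, integrable_indicator_iff measurableSet_Iio]
      rw [IntegrableOn, Measure.restrict_restrict measurableSet_Iio, hIoo_inter t ht]
      exact (hsec t ht).mul_const (g t)
    · have heq : ∀ᵐ u ∂μ, (0:ℝ) = f (u, t) := by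
        filter_upwards [ae_restrict_mem measurableSet_Ioo] with u hu
        simp only [hf, indicator_apply, mem_Ioo]
        rw [mem_Ioo] at ht
        have : ¬(u < t ∧ t < b) := fun hc => ht ⟨hu.1.trans hc.1, hc.2⟩
        simp [this]
      exact (integrable_zero _ _ _).congr heq
  -- norms of sections
  have hnorm : ∀ t ∈ Ioo y b,
      (∫ u, ‖f (u, t)‖ ∂μ) = (∫ u in Ioo y t, κ u t) * ‖g t‖ := by
    intro t ht
    have heq : ∀ᵐ u ∂μ, ‖f (u, t)‖ = (Iio t).indicator (fun u => κ u t * ‖g t‖) u := by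
      filter_upwards [ae_restrict_mem measurableSet_Ioo] with u hu
      simp only [hf, indicator_apply, mem_Iio, mem_Ioo]
      by_cases h : u < t
      · simp only [h, ht.2, and_true, if_true, true_and]
        rw [norm_mul, Real.norm_of_nonneg (hκ0 u t hu.1 h), Real.norm_eq_abs]
      · simp [h]
    rw [integral_congr_ae heq, hμ, integral_indicator measurableSet_Iio,
      Measure.restrict_restrict measurableSet_Iio, hIoo_inter t ht,
      integral_mul_const]
  have hnorm0 : ∀ t, t ∉ Ioo y b → (∫ u, ‖f (u, t)‖ ∂μ) = 0 := by
    intro t ht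
    have heq : ∀ᵐ u ∂μ, ‖f (u, t)‖ = 0 := by
      filter_upwards [ae_restrict_mem measurableSet_Ioo] with u hu
      simp only [hf, indicator_apply, mem_Ioo]
      rw [mem_Ioo] at ht
      have : ¬(u < t ∧ t < b) := fun hc => ht ⟨hu.1.trans hc.1, hc.2⟩
      simp [this]
    rw [integral_congr_ae heq, integral_zero]
  -- integrability on the product
  have hfi : Integrable f (μ.prod volume) := by
    rw [integrable_prod_iff' hfm]
    refine ⟨Eventually.of_forall hsec', ?_⟩
    refine Integrable.mono' (hg.norm.const_mul C) hfm.prod_swap.norm.integral_prod_right' ?_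
    refine Eventually.of_forall fun t => ?_
    rw [Real.norm_of_nonneg (integral_nonneg fun u => norm_nonneg _)]
    by_cases ht : t ∈ Ioo y b
    · rw [hnorm t ht]
      exact mul_le_mul_of_nonneg_right (hbound t ht) (norm_nonneg _)
    · rw [hnorm0 t ht]
      positivity
  -- the inner integral in the first order
  have hinner : ∀ u, (∫ t, f (u, t)) = ∫ t in Ioo u b, κ u t * g t := by
    intro u
    have h1 : (fun t => f (u, t)) = (Ioo u b).indicator (fun t => κ u t * g t) := by
      funext t
      simp only [hf, indicator_apply, mem_Ioo]
      by_cases h : u < t ∧ t < b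
      · simp [h]
      · simp [h]
    rw [h1, integral_indicator measurableSet_Ioo]
  -- the inner integral in the swapped order
  have hinner' : ∀ t, (∫ u, f (u, t) ∂μ)
      = (Ioo y b).indicator (fun t => (∫ u in Ioo y t, κ u t) * g t) t := by
    intro t
    by_cases ht : t ∈ Ioo y b
    · rw [indicator_of_mem ht]
      have heq : ∀ᵐ u ∂μ, f (u, t) = (Iio t).indicator (fun u => κ u t * g t) u := by
        filter_upwards [ae_restrict_mem measurableSet_Ioo] with u hu
        simp only [hf, indicator_apply, mem_Iio, mem_Ioo]
        by_cases h : u < t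
        · simp [h, ht.2]
        · simp [h]
      rw [integral_congr_ae heq, hμ, integral_indicator measurableSet_Iio,
        Measure.restrict_restrict measurableSet_Iio, hIoo_inter t ht,
        integral_mul_const]
    · rw [indicator_of_notMem ht]
      have heq : ∀ᵐ u ∂μ, f (u, t) = (0:ℝ) := by
        filter_upwards [ae_restrict_mem measurableSet_Ioo] with u hu
        simp only [hf, indicator_apply, mem_Ioo]
        rw [mem_Ioo] at ht
        have : ¬(u < t ∧ t < b) := fun hc => ht ⟨hu.1.trans hc.1, hc.2⟩
        simp [this]
      rw [integral_congr_ae heq, integral_zero]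
  constructor
  · exact hfi.integral_prod_left.congr (Eventually.of_forall fun u => (hinner u))
  · have hswap := integral_integral_swap (f := fun u t => f (u, t)) hfi
    calc (∫ u in Ioo y b, ∫ t in Ioo u b, κ u t * g t)
        = ∫ u, (∫ t, f (u, t)) ∂μ :=
          integral_congr_ae (Eventually.of_forall fun u => (hinner u).symm)
      _ = ∫ t, (∫ u, f (u, t) ∂μ) := hswap
      _ = ∫ t, (Ioo y b).indicator (fun t => (∫ u in Ioo y t, κ u t) * g t) t :=
          integral_congr_ae (Eventually.of_forall fun t => hinner' t)
      _ = ∫ t in Ioo y b, (∫ u in Ioo y t, κ u t) * g t :=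
          integral_indicator measurableSet_Ioo

/-- If `w` is absolutely continuous on `[a,b]` with derivative `w' ∈ L¹(a,b)` and
`w(b) = 0`, then differentiation commutes with the right fractional integral:
`D (I_{b-}^σ w) = I_{b-}^σ w'` a.e. on `(a,b)`. -/
theorem deriv_comm_right_fractional_integral (a b σ : ℝ) (hab : a < b)
    (hσ0 : 0 < σ) (hσ1 : σ < 1) (w w' : ℝ → ℝ)
    (hw' : IntegrableOn w' (Ioo a b))
    (hAC : ∀ x ∈ Icc a b, w x = w a + ∫ s in a..x, w' s)
    (hwb : w b = 0) :
    ∀ᵐ x ∂(volume.restrict (Ioo a b)),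
      HasDerivAt (fun y => Ir b σ w y) (Ir b σ w' x) x := by
  have hr1 : (-1:ℝ) < σ - 1 := by linarith
  have hσne : σ ≠ 0 := ne_of_gt hσ0
  -- values of the inner kernel integrals
  have hval1 : ∀ y t : ℝ, y < t → (∫ u in Ioo y t, (u - y) ^ (σ-1)) = (t - y) ^ σ / σ := by
    intro y t hyt
    rw [← integral_Ioc_eq_integral_Ioo, ← intervalIntegral.integral_of_le hyt.le,
      intervalIntegral.integral_comp_sub_right (fun x => x ^ (σ-1)) y, sub_self,
      integral_rpow (Or.inl hr1), Real.zero_rpow (by linarith : σ - 1 + 1 ≠ 0)]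
    rw [show σ - 1 + 1 = σ by ring]
    ring
  have hval2 : ∀ y t : ℝ, y < t → (∫ u in Ioo y t, (t - u) ^ (σ-1)) = (t - y) ^ σ / σ := by
    intro y t hyt
    rw [← integral_Ioc_eq_integral_Ioo, ← intervalIntegral.integral_of_le hyt.le,
      intervalIntegral.integral_comp_sub_left (fun x => x ^ (σ-1)) t, sub_self,
      integral_rpow (Or.inl hr1), Real.zero_rpow (by linarith : σ - 1 + 1 ≠ 0)]
    rw [show σ - 1 + 1 = σ by ring]
    ring
  -- integrability of the kernels on sections
  have hsec1 : ∀ y t : ℝ, y < t → IntegrableOn (fun u => (u - y) ^ (σ-1)) (Ioo y t) := by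
    intro y t hyt
    have h := (intervalIntegral.intervalIntegrable_rpow' hr1 (a := 0) (b := t - y)).comp_sub_right y
    simp only [zero_add, sub_add_cancel] at h
    exact (intervalIntegrable_iff_integrableOn_Ioo_of_le hyt.le).1 h
  have hsec2 : ∀ y t : ℝ, y < t → IntegrableOn (fun u => (t - u) ^ (σ-1)) (Ioo y t) := by
    intro y t hyt
    have h := (intervalIntegral.intervalIntegrable_rpow' hr1 (a := 0) (b := t - y)).comp_sub_left t
    simp only [sub_zero, sub_sub_cancel] at h
    exact (intervalIntegrable_iff_integrableOn_Ioo_of_le hyt.le).1 h.symm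
  -- the extended derivative
  set g : ℝ → ℝ := (Ioo a b).indicator w' with hgdef
  have hg : Integrable g := (integrable_indicator_iff measurableSet_Ioo).2 hw'
  -- bound constant
  set C : ℝ := (b - a) ^ σ / σ with hCdef
  have hC : 0 ≤ C := div_nonneg (rpow_nonneg (by linarith) σ) hσ0.le
  have hCb : ∀ y t : ℝ, a ≤ y → y < t → t ≤ b → (t - y) ^ σ / σ ≤ C := by
    intro y t hay hyt htb
    rw [hCdef]
    gcongr <;> linarith
  -- integrability of w' on subintervals
  have hw'Ioc : IntegrableOn w' (Ioc a b) := (integrableOn_Ioc_iff_integrableOn_Ioo (by finiteness)).2 hw'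
  have hw'int : ∀ u v : ℝ, a ≤ u → u ≤ v → v ≤ b → IntervalIntegrable w' volume u v := by
    intro u v hu huv hv
    rw [intervalIntegrable_iff_integrableOn_Ioc_of_le huv]
    exact hw'Ioc.mono_set (Ioc_subset_Ioc hu hv)
  -- key consequence of absolute continuity
  have hwkey : ∀ u ∈ Ioo a b, (∫ t in Ioo u b, g t) = -w u := by
    intro u hu
    have h1 : (∫ t in Ioo u b, g t) = ∫ t in Ioo u b, w' t := by
      apply setIntegral_congr_fun measurableSet_Ioo
      intro t ht
      exact Set.indicator_of_mem (show t ∈ Ioo a b from ⟨hu.1.trans ht.1, ht.2⟩) w'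
    have h2 : (∫ t in Ioo u b, w' t) = ∫ t in u..b, w' t := by
      rw [intervalIntegral.integral_of_le hu.2.le, integral_Ioc_eq_integral_Ioo]
    have h3 : (∫ t in u..b, w' t) = (∫ t in a..b, w' t) - ∫ t in a..u, w' t :=
      (intervalIntegral.integral_interval_sub_left (hw'int a b le_rfl hab.le le_rfl)
        (hw'int a u le_rfl hu.1.le hu.2.le)).symm
    have h4 := hAC b ⟨hab.le, le_rfl⟩
    have h5 := hAC u ⟨hu.1.le, hu.2.le⟩
    rw [h1, h2, h3]
    rw [hwb] at h4
    linarith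
  -- the function G
  set G : ℝ → ℝ := fun u => ∫ t in Ioo u b, (t - u) ^ (σ-1) * g t with hGdef
  -- Fubini with base point a for integrability of G
  have hκ2m : Measurable (Function.uncurry (fun u t : ℝ => (t - u) ^ (σ-1))) := by fun_prop
  have hfubG : ∀ y, a ≤ y → y < b →
      IntegrableOn G (Ioo y b) ∧
      (∫ u in Ioo y b, G u) = ∫ t in Ioo y b, ((t - y) ^ σ / σ) * g t := by
    intro y hay hyb
    have h := fubini_kernel y b g hg (fun u t => (t - u) ^ (σ-1)) hκ2m
      (fun u t _ hut => rpow_nonneg (by linarith) _)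
      (fun t ht => hsec2 y t ht.1) C hC
      (fun t ht => by rw [hval2 y t ht.1]; exact hCb y t hay ht.1 ht.2.le)
    refine ⟨h.1, ?_⟩
    rw [h.2]
    apply setIntegral_congr_fun measurableSet_Ioo
    intro t ht
    show (∫ u in Ioo y t, (t - u) ^ (σ-1)) * g t = ((t - y) ^ σ / σ) * g t
    rw [hval2 y t ht.1]
  -- Fubini with kernel (u - y) ^ (σ-1)
  have hfubW : ∀ y, a ≤ y → y < b →
      (∫ u in Ioo y b, (u - y) ^ (σ-1) * (∫ t in Ioo u b, g t))
        = ∫ t in Ioo y b, ((t - y) ^ σ / σ) * g t := by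
    intro y hay hyb
    have hκ1m : Measurable (Function.uncurry (fun u t : ℝ => (u - y) ^ (σ-1))) := by fun_prop
    have h := fubini_kernel y b g hg (fun u t => (u - y) ^ (σ-1)) hκ1m
      (fun u t hyu _ => rpow_nonneg (by linarith) _)
      (fun t ht => hsec1 y t ht.1) C hC
      (fun t ht => by rw [hval1 y t ht.1]; exact hCb y t hay ht.1 ht.2.le)
    have h2 := h.2
    calc (∫ u in Ioo y b, (u - y) ^ (σ-1) * (∫ t in Ioo u b, g t))
        = ∫ u in Ioo y b, ∫ t in Ioo u b, (u - y) ^ (σ-1) * g t := by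
          apply setIntegral_congr_fun measurableSet_Ioo
          intro u hu
          show (u - y) ^ (σ-1) * (∫ t in Ioo u b, g t) = ∫ t in Ioo u b, (u - y) ^ (σ-1) * g t
          rw [← integral_const_mul]
      _ = ∫ t in Ioo y b, (∫ u in Ioo y t, (u - y) ^ (σ-1)) * g t := h2
      _ = ∫ t in Ioo y b, ((t - y) ^ σ / σ) * g t := by
          apply setIntegral_congr_fun measurableSet_Ioo
          intro t ht
          show (∫ u in Ioo y t, (u - y) ^ (σ-1)) * g t = ((t - y) ^ σ / σ) * g t
          rw [hval1 y t ht.1]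
  -- the representation of Ir b σ w
  have hGint : IntegrableOn G (Ioo a b) := (hfubG a le_rfl hab).1
  set G₀ : ℝ → ℝ := (Ioo a b).indicator G with hG0def
  have hG0int : Integrable G₀ := (integrable_indicator_iff measurableSet_Ioo).2 hGint
  have hrep : ∀ y ∈ Ioo a b, Ir b σ w y
      = (1 / Real.Gamma σ) * ((∫ u in a..y, G₀ u) - ∫ u in a..b, G₀ u) := by
    intro y hy
    have e1 : (∫ s in y..b, (s - y) ^ (σ-1) * w s) = ∫ s in Ioo y b, (s - y) ^ (σ-1) * w s := by
      rw [intervalIntegral.integral_of_le hy.2.le, integral_Ioc_eq_integral_Ioo]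
    have e2 : (∫ s in Ioo y b, (s - y) ^ (σ-1) * w s)
        = -∫ u in Ioo y b, (u - y) ^ (σ-1) * (∫ t in Ioo u b, g t) := by
      rw [← integral_neg]
      apply setIntegral_congr_fun measurableSet_Ioo
      intro s hs
      show (s - y) ^ (σ-1) * w s = -((s - y) ^ (σ-1) * ∫ t in Ioo s b, g t)
      rw [hwkey s ⟨hy.1.trans hs.1, hs.2⟩]
      ring
    have e3 : (∫ u in Ioo y b, G u) = ∫ u in y..b, G₀ u := by
      rw [intervalIntegral.integral_of_le hy.2.le, integral_Ioc_eq_integral_Ioo]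
      apply setIntegral_congr_fun measurableSet_Ioo
      intro u hu
      exact (Set.indicator_of_mem (show u ∈ Ioo a b from ⟨hy.1.trans hu.1, hu.2⟩) G).symm
    have e4 : (∫ u in y..b, G₀ u) = (∫ u in a..b, G₀ u) - ∫ u in a..y, G₀ u :=
      (intervalIntegral.integral_interval_sub_left hG0int.intervalIntegrable
        hG0int.intervalIntegrable).symm
    rw [Ir, e1, e2, hfubW y hy.1.le hy.2, ← (hfubG y hy.1.le hy.2).2, e3, e4]
    ring
  -- conclusion
  have hae := ae_hasDerivAt_primitive a G₀ hG0int
  filter_upwards [ae_restrict_of_ae hae, ae_restrict_mem measurableSet_Ioo] with x hx hmem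
  have hd : HasDerivAt (fun y => (1 / Real.Gamma σ) * ((∫ u in a..y, G₀ u) - ∫ u in a..b, G₀ u))
      ((1 / Real.Gamma σ) * G₀ x) x := by
    simpa using ((hx.sub_const (∫ u in a..b, G₀ u)).const_mul (1 / Real.Gamma σ))
  have hcong : (fun y => Ir b σ w y)
      =ᶠ[𝓝 x] fun y => (1 / Real.Gamma σ) * ((∫ u in a..y, G₀ u) - ∫ u in a..b, G₀ u) := by
    filter_upwards [isOpen_Ioo.mem_nhds hmem] with y hy
    exact hrep y hy
  have hval : (1 / Real.Gamma σ) * G₀ x = Ir b σ w' x := by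
    have hx0 : G₀ x = ∫ t in Ioo x b, (t - x) ^ (σ-1) * w' t := by
      rw [hG0def, Set.indicator_of_mem hmem]
      calc G x = ∫ t in Ioo x b, (t - x) ^ (σ-1) * g t := rfl
        _ = ∫ t in Ioo x b, (t - x) ^ (σ-1) * w' t := by
            apply setIntegral_congr_fun measurableSet_Ioo
            intro t ht
            show (t - x) ^ (σ-1) * g t = (t - x) ^ (σ-1) * w' t
            rw [hgdef, Set.indicator_of_mem (show t ∈ Ioo a b from ⟨hmem.1.trans ht.1, ht.2⟩) w']
    rw [hx0, Ir, intervalIntegral.integral_of_le hmem.2.le, integral_Ioc_eq_integral_Ioo]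
  rw [← hval]
  exact hd.congr_of_eventuallyEq hcong
end

section
/- Let 0 < beta < 1, 0 ≤ theta ≤ 1, and let g : (0,1) → ℝ be defined by g(x) = 4 for x in (0,1/4), g(x) = −4 for x in (1/4,3/4), g(x) = 4 for x in (3/4,1). Then theta·(I_{0+}^beta g)(1/4) + (1−theta)·(I_{1-}^beta g)(1/4) = (4^{1−beta}/Gamma(beta+1)) · ((2·theta − 1) + (1−theta)(1 + 3^beta − 2^{1+beta})), and theta·(I_{0+}^beta g)(3/4) + (1−theta)·(I_{1-}^beta g)(3/4) = (4^{1−beta}/Gamma(beta+1)) · ((1 − 2·theta) + theta·(1 + 3^beta − 2^{1+beta})). -/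
open MeasureTheory Real Set

/-- The a.e. derivative of the piecewise-linear test function: `g = 4` on
`(0,1/4)`, `g = -4` on `(1/4,3/4)`, `g = 4` on `(3/4,1)`. -/
noncomputable def gpl (x : ℝ) : ℝ :=
  if x < 1 / 4 then 4 else if x < 3 / 4 then -4 else 4

lemma ae_ne_pt (c : ℝ) : ∀ᵐ x : ℝ, x ≠ c := by
  rw [MeasureTheory.ae_iff]
  simpa [Set.setOf_eq_eq_singleton] using measure_singleton c

lemma intL (x r a b : ℝ) (hr : -1 < r) :
    ∫ s in a..b, (x - s) ^ r = ((x - a) ^ (r+1) - (x - b) ^ (r+1)) / (r+1) := by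
  rw [intervalIntegral.integral_comp_sub_left (fun u => u ^ r) x,
    integral_rpow (Or.inl hr)]

lemma intR (x r a b : ℝ) (hr : -1 < r) :
    ∫ s in a..b, (s - x) ^ r = ((b - x) ^ (r+1) - (a - x) ^ (r+1)) / (r+1) := by
  rw [intervalIntegral.integral_comp_sub_right (fun u => u ^ r) x,
    integral_rpow (Or.inl hr)]

lemma iiL (x r a b : ℝ) (hr : -1 < r) :
    IntervalIntegrable (fun s => (x - s) ^ r) volume a b := by
  have := (intervalIntegral.intervalIntegrable_rpow' (a := x - a) (b := x - b) hr).comp_sub_left x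
  simpa using this

lemma iiR (x r a b : ℝ) (hr : -1 < r) :
    IntervalIntegrable (fun s => (s - x) ^ r) volume a b := by
  have := (intervalIntegral.intervalIntegrable_rpow' (a := a - x) (b := b - x) hr).comp_sub_right x
  simpa using this

lemma ii_congr {f g : ℝ → ℝ} {a b : ℝ} (hf : IntervalIntegrable f volume a b)
    (h : ∀ᵐ x : ℝ, x ∈ Set.uIoc a b → f x = g x) : IntervalIntegrable g volume a b := by
  rw [intervalIntegrable_iff] at hf ⊢
  exact hf.congr ((ae_restrict_iff' measurableSet_uIoc).2 h)

lemma ae_piece {a b cst : ℝ} (hab : a ≤ b) (h : ∀ s ∈ Set.Ioo a b, gpl s = cst)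
    (k : ℝ → ℝ) :
    ∀ᵐ s : ℝ, s ∈ Set.uIoc a b → k s * gpl s = k s * cst := by
  filter_upwards [ae_ne_pt b] with s hs hmem
  rw [Set.uIoc_of_le hab] at hmem
  rw [h s ⟨hmem.1, lt_of_le_of_ne hmem.2 hs⟩]

lemma pieceL (x r a b cst : ℝ) (hr : -1 < r) (hab : a ≤ b)
    (h : ∀ s ∈ Set.Ioo a b, gpl s = cst) :
    ∫ s in a..b, (x - s) ^ r * gpl s
      = cst * (((x - a) ^ (r+1) - (x - b) ^ (r+1)) / (r+1)) := by
  rw [intervalIntegral.integral_congr_ae (ae_piece hab h _)]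
  simp_rw [mul_comm _ cst]
  rw [intervalIntegral.integral_const_mul, intL x r a b hr]

lemma pieceR (x r a b cst : ℝ) (hr : -1 < r) (hab : a ≤ b)
    (h : ∀ s ∈ Set.Ioo a b, gpl s = cst) :
    ∫ s in a..b, (s - x) ^ r * gpl s
      = cst * (((b - x) ^ (r+1) - (a - x) ^ (r+1)) / (r+1)) := by
  rw [intervalIntegral.integral_congr_ae (ae_piece hab h _)]
  simp_rw [mul_comm _ cst]
  rw [intervalIntegral.integral_const_mul, intR x r a b hr]

lemma ii_pieceL (x r a b cst : ℝ) (hr : -1 < r) (hab : a ≤ b)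
    (h : ∀ s ∈ Set.Ioo a b, gpl s = cst) :
    IntervalIntegrable (fun s => (x - s) ^ r * gpl s) volume a b := by
  refine ii_congr ((iiL x r a b hr).mul_const cst) ?_
  filter_upwards [ae_piece hab h (fun s => (x - s) ^ r)] with s hs hmem
  exact (hs hmem).symm

lemma ii_pieceR (x r a b cst : ℝ) (hr : -1 < r) (hab : a ≤ b)
    (h : ∀ s ∈ Set.Ioo a b, gpl s = cst) :
    IntervalIntegrable (fun s => (s - x) ^ r * gpl s) volume a b := by
  refine ii_congr ((iiR x r a b hr).mul_const cst) ?_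
  filter_upwards [ae_piece hab h (fun s => (s - x) ^ r)] with s hs hmem
  exact (hs hmem).symm

/-- Values at `x = 1/4` and `x = 3/4` of the weighted two-sided fractional
integral of `gpl` of order `0 < β < 1` with weight `θ ∈ [0,1]`. -/
theorem two_sided_fractional_integral_values (β θ : ℝ) (hβ0 : 0 < β) (hβ1 : β < 1)
    (hθ : θ ∈ Icc (0:ℝ) 1) :
    θ * Il 0 β gpl (1 / 4) + (1 - θ) * Ir 1 β gpl (1 / 4)
      = (4:ℝ) ^ (1 - β) / Real.Gamma (β + 1)
          * ((2 * θ - 1) + (1 - θ) * (1 + (3:ℝ) ^ β - (2:ℝ) ^ (1 + β))) ∧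
    θ * Il 0 β gpl (3 / 4) + (1 - θ) * Ir 1 β gpl (3 / 4)
      = (4:ℝ) ^ (1 - β) / Real.Gamma (β + 1)
          * ((1 - 2 * θ) + θ * (1 + (3:ℝ) ^ β - (2:ℝ) ^ (1 + β))) := by
  have hβ : β ≠ 0 := ne_of_gt hβ0
  have hr : (-1:ℝ) < β - 1 := by linarith
  have hΓ : (0:ℝ) < Real.Gamma β := Real.Gamma_pos_of_pos hβ0
  have hG1 : Real.Gamma (β + 1) = β * Real.Gamma β := Real.Gamma_add_one hβ
  have g1 : ∀ s ∈ Set.Ioo (0:ℝ) (1/4), gpl s = 4 := fun s hs => by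
    simp only [gpl]; rw [if_pos hs.2]
  have g2 : ∀ s ∈ Set.Ioo (1/4:ℝ) (3/4), gpl s = -4 := fun s hs => by
    simp only [gpl]; rw [if_neg (not_lt.2 hs.1.le), if_pos hs.2]
  have g3 : ∀ s ∈ Set.Ioo (3/4:ℝ) 1, gpl s = 4 := fun s hs => by
    have h1 : ¬ s < 1/4 := by push_neg; nlinarith [hs.1]
    have h2 : ¬ s < 3/4 := not_lt.2 hs.1.le
    simp only [gpl]; rw [if_neg h1, if_neg h2]
  have hbb : β - 1 + 1 = β := by ring
  have hz : (0:ℝ) ^ β = 0 := Real.zero_rpow hβ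
  have h2 : ((1:ℝ)/2) ^ β = ((2:ℝ)^β)⁻¹ := by
    rw [one_div, Real.inv_rpow (by norm_num)]
  have h4 : ((1:ℝ)/4) ^ β = ((4:ℝ)^β)⁻¹ := by
    rw [one_div, Real.inv_rpow (by norm_num)]
  have h34 : ((3:ℝ)/4) ^ β = (3:ℝ)^β / (4:ℝ)^β := by
    rw [Real.div_rpow (by norm_num) (by norm_num)]
  have h41 : (4:ℝ) ^ (1-β) = 4 / (4:ℝ)^β := by
    rw [Real.rpow_sub (by norm_num), Real.rpow_one]
  have h21 : (2:ℝ) ^ (1+β) = 2 * (2:ℝ)^β := by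
    rw [Real.rpow_add (by norm_num), Real.rpow_one]
  have h42 : (4:ℝ) ^ β = (2:ℝ)^β * (2:ℝ)^β := by
    rw [show (4:ℝ) = 2*2 by norm_num, Real.mul_rpow (by norm_num) (by norm_num)]
  have ha : (0:ℝ) < (2:ℝ)^β := Real.rpow_pos_of_pos (by norm_num) β
  have hb3 : (0:ℝ) < (3:ℝ)^β := Real.rpow_pos_of_pos (by norm_num) β
  constructor
  · have split : (∫ s in (1/4:ℝ)..1, (s - 1/4) ^ (β-1) * gpl s)
        = (∫ s in (1/4:ℝ)..(3/4), (s - 1/4) ^ (β-1) * gpl s)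
          + ∫ s in (3/4:ℝ)..1, (s - 1/4) ^ (β-1) * gpl s :=
      (intervalIntegral.integral_add_adjacent_intervals
        (ii_pieceR (1/4) (β-1) (1/4) (3/4) (-4) hr (by norm_num) g2)
        (ii_pieceR (1/4) (β-1) (3/4) 1 4 hr (by norm_num) g3)).symm
    simp only [Il, Ir]
    rw [split, pieceL (1/4) (β-1) 0 (1/4) 4 hr (by norm_num) g1,
      pieceR (1/4) (β-1) (1/4) (3/4) (-4) hr (by norm_num) g2,
      pieceR (1/4) (β-1) (3/4) 1 4 hr (by norm_num) g3, hbb]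
    norm_num
    rw [hz, h2, h4, h34, h41, h21, hG1, h42]
    field_simp
    ring
  · have split : (∫ s in (0:ℝ)..(3/4), (3/4 - s) ^ (β-1) * gpl s)
        = (∫ s in (0:ℝ)..(1/4), (3/4 - s) ^ (β-1) * gpl s)
          + ∫ s in (1/4:ℝ)..(3/4), (3/4 - s) ^ (β-1) * gpl s :=
      (intervalIntegral.integral_add_adjacent_intervals
        (ii_pieceL (3/4) (β-1) 0 (1/4) 4 hr (by norm_num) g1)
        (ii_pieceL (3/4) (β-1) (1/4) (3/4) (-4) hr (by norm_num) g2)).symm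
    simp only [Il, Ir]
    rw [split, pieceL (3/4) (β-1) 0 (1/4) 4 hr (by norm_num) g1,
      pieceL (3/4) (β-1) (1/4) (3/4) (-4) hr (by norm_num) g2,
      pieceR (3/4) (β-1) (3/4) 1 4 hr (by norm_num) g3, hbb]
    norm_num
    rw [hz, h2, h4, h34, h41, h21, hG1, h42]
    field_simp
    ring
end

section
/- (Loss of coercivity of the Galerkin bilinear form for variable coefficients) For every beta with 0 < beta < 1 and every theta in [0,1], there exists a measurable function K : (0,1) → ℝ and constants 0 < K_m ≤ K_M such that K_m ≤ K(x) ≤ K_M for all x in (0,1) (K may be taken piecewise constant with three pieces), and such that the Galerkin bilinear form B evaluated at the explicit piecewise-linear function w is strictly negative: B(w,w) = ∫_0^1 K(x) · (theta·(I_{0+}^beta g)(x) + (1−theta)·(I_{1-}^beta g)(x)) · g(x) dx < 0, where g is the almost-everywhere derivative of w. -/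
open MeasureTheory Real Set

/-! ### Auxiliary lemmas -/

open intervalIntegral

lemma gpl_measurable : Measurable gpl := by
  unfold gpl
  exact Measurable.ite (measurableSet_lt measurable_id measurable_const) measurable_const
    (Measurable.ite (measurableSet_lt measurable_id measurable_const) measurable_const
      measurable_const)

lemma gpl_norm (x : ℝ) : ‖gpl x‖ ≤ 4 := by
  rw [Real.norm_eq_abs]; unfold gpl; split_ifs <;> norm_num

lemma key_int {β : ℝ} (hβ0 : 0 < β) (x a b : ℝ) :
    ∫ s in a..b, (x - s) ^ (β - 1) = ((x - a) ^ β - (x - b) ^ β) / β := by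
  rw [intervalIntegral.integral_comp_sub_left (fun u => u ^ (β - 1)) x,
    integral_rpow (Or.inl (by linarith))]
  have h : β - 1 + 1 = β := by ring
  rw [h]

lemma key_intble {β : ℝ} (hβ0 : 0 < β) (x a b : ℝ) :
    IntervalIntegrable (fun s => (x - s) ^ (β - 1)) volume a b := by
  have h := (intervalIntegral.intervalIntegrable_rpow' (a := x - b) (b := x - a)
    (show (-1:ℝ) < β - 1 by linarith)).comp_sub_left x
  simpa using h.symm

lemma key_int' {β : ℝ} (hβ0 : 0 < β) (x a b : ℝ) :
    ∫ s in a..b, (s - x) ^ (β - 1) = ((b - x) ^ β - (a - x) ^ β) / β := by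
  rw [intervalIntegral.integral_comp_sub_right (fun u => u ^ (β - 1)) x,
    integral_rpow (Or.inl (by linarith))]
  have h : β - 1 + 1 = β := by ring
  rw [h]

lemma key_intble' {β : ℝ} (hβ0 : 0 < β) (x a b : ℝ) :
    IntervalIntegrable (fun s => (s - x) ^ (β - 1)) volume a b := by
  have h := (intervalIntegral.intervalIntegrable_rpow' (a := a - x) (b := b - x)
    (show (-1:ℝ) < β - 1 by linarith)).comp_sub_right x
  simpa using h

lemma intble_mul {β : ℝ} (hβ0 : 0 < β) (x a b : ℝ) :
    IntervalIntegrable (fun s => (x - s) ^ (β - 1) * gpl s) volume a b := by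
  have h : (fun s => (x - s) ^ (β - 1) * gpl s) = fun s => gpl s * (x - s) ^ (β - 1) :=
    funext fun s => mul_comm _ _
  rw [h]
  have hk := key_intble hβ0 x a b
  exact ⟨hk.1.bdd_mul gpl_measurable.aestronglyMeasurable (ae_of_all _ gpl_norm),
    hk.2.bdd_mul gpl_measurable.aestronglyMeasurable (ae_of_all _ gpl_norm)⟩

lemma intble_mul' {β : ℝ} (hβ0 : 0 < β) (x a b : ℝ) :
    IntervalIntegrable (fun s => (s - x) ^ (β - 1) * gpl s) volume a b := by
  have h : (fun s => (s - x) ^ (β - 1) * gpl s) = fun s => gpl s * (s - x) ^ (β - 1) :=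
    funext fun s => mul_comm _ _
  rw [h]
  have hk := key_intble' hβ0 x a b
  exact ⟨hk.1.bdd_mul gpl_measurable.aestronglyMeasurable (ae_of_all _ gpl_norm),
    hk.2.bdd_mul gpl_measurable.aestronglyMeasurable (ae_of_all _ gpl_norm)⟩

lemma ae_ne_pt_s13 (b : ℝ) : ∀ᵐ s : ℝ, s ≠ b := by
  have : ({b} : Set ℝ)ᶜ ∈ ae (volume : Measure ℝ) := by
    rw [mem_ae_iff, compl_compl]
    exact measure_singleton b
  filter_upwards [this] with s hs
  simpa using hs

lemma integral_piece {β : ℝ} (hβ0 : 0 < β) (x a b : ℝ) (hab : a ≤ b) (c : ℝ)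
    (hc : ∀ s ∈ Ioo a b, gpl s = c) :
    ∫ s in a..b, (x - s) ^ (β - 1) * gpl s = c * (((x - a) ^ β - (x - b) ^ β) / β) := by
  rw [intervalIntegral.integral_congr_ae (g := fun s => c * (x - s) ^ (β - 1)) ?_,
    intervalIntegral.integral_const_mul, key_int hβ0]
  filter_upwards [ae_ne_pt_s13 b] with s hs hmem
  rw [uIoc_of_le hab] at hmem
  rw [hc s ⟨hmem.1, lt_of_le_of_ne hmem.2 hs⟩, mul_comm]

lemma integral_piece' {β : ℝ} (hβ0 : 0 < β) (x a b : ℝ) (hab : a ≤ b) (c : ℝ)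
    (hc : ∀ s ∈ Ioo a b, gpl s = c) :
    ∫ s in a..b, (s - x) ^ (β - 1) * gpl s = c * (((b - x) ^ β - (a - x) ^ β) / β) := by
  rw [intervalIntegral.integral_congr_ae (g := fun s => c * (s - x) ^ (β - 1)) ?_,
    intervalIntegral.integral_const_mul, key_int' hβ0]
  filter_upwards [ae_ne_pt_s13 b] with s hs hmem
  rw [uIoc_of_le hab] at hmem
  rw [hc s ⟨hmem.1, lt_of_le_of_ne hmem.2 hs⟩, mul_comm]

/-- The explicit closed form of both fractional integrals of `gpl`. -/
noncomputable def Phi (β x : ℝ) : ℝ :=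
  (4 / (β * Real.Gamma β)) *
    (x ^ β - 2 * (max (x - 1/4) 0) ^ β + 2 * (max (x - 3/4) 0) ^ β)

lemma Il_eq {β : ℝ} (hβ0 : 0 < β) {x : ℝ} (hx : x ∈ Icc (0:ℝ) 1) :
    Il 0 β gpl x = Phi β x := by
  have hβ : β ≠ 0 := ne_of_gt hβ0
  have hΓ : Real.Gamma β ≠ 0 := ne_of_gt (Real.Gamma_pos_of_pos hβ0)
  unfold Il Phi
  rcases le_or_gt x (1/4) with h1 | h1
  · rw [integral_piece hβ0 x 0 x hx.1 4 (fun s hs => if_pos (lt_of_lt_of_le hs.2 h1))]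
    rw [max_eq_right (by linarith), max_eq_right (by linarith),
      Real.zero_rpow hβ, sub_self, sub_zero, Real.zero_rpow hβ]
    ring
  · rcases le_or_gt x (3/4) with h2 | h2
    · rw [← integral_add_adjacent_intervals (intble_mul hβ0 x 0 (1/4)) (intble_mul hβ0 x (1/4) x),
        integral_piece hβ0 x 0 (1/4) (by norm_num) 4 (fun s hs => if_pos hs.2),
        integral_piece hβ0 x (1/4) x h1.le (-4)
          (fun s hs => by rw [gpl, if_neg (by linarith [hs.1]), if_pos (by linarith [hs.2])])]
      rw [max_eq_left (by linarith), max_eq_right (by linarith),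
        Real.zero_rpow hβ, sub_self, Real.zero_rpow hβ, sub_zero]
      ring
    · rw [← integral_add_adjacent_intervals (intble_mul hβ0 x 0 (3/4)) (intble_mul hβ0 x (3/4) x),
        ← integral_add_adjacent_intervals (intble_mul hβ0 x 0 (1/4)) (intble_mul hβ0 x (1/4) (3/4)),
        integral_piece hβ0 x 0 (1/4) (by norm_num) 4 (fun s hs => if_pos hs.2),
        integral_piece hβ0 x (1/4) (3/4) (by norm_num) (-4)
          (fun s hs => by rw [gpl, if_neg (by linarith [hs.1]), if_pos hs.2]),
        integral_piece hβ0 x (3/4) x h2.le 4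
          (fun s hs => by rw [gpl, if_neg (by linarith [hs.1]), if_neg (by linarith [hs.1])])]
      rw [max_eq_left (by linarith), max_eq_left (by linarith),
        sub_self, Real.zero_rpow hβ, sub_zero]
      ring

lemma Ir_eq {β : ℝ} (hβ0 : 0 < β) {x : ℝ} (hx : x ∈ Icc (0:ℝ) 1) :
    Ir 1 β gpl x = Phi β (1 - x) := by
  have hβ : β ≠ 0 := ne_of_gt hβ0
  have hΓ : Real.Gamma β ≠ 0 := ne_of_gt (Real.Gamma_pos_of_pos hβ0)
  unfold Ir Phi
  rcases le_or_gt (3/4) x with h1 | h1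
  · rw [integral_piece' hβ0 x x 1 hx.2 4
      (fun s hs => by rw [gpl, if_neg (by linarith [hs.1]), if_neg (by linarith [hs.1])])]
    rw [show (1:ℝ) - x - 1/4 = 3/4 - x by ring, show (1:ℝ) - x - 3/4 = 1/4 - x by ring,
      max_eq_right (by linarith), max_eq_right (by linarith),
      Real.zero_rpow hβ, sub_self, Real.zero_rpow hβ]
    ring
  · rcases le_or_gt (1/4) x with h2 | h2
    · rw [← integral_add_adjacent_intervals (intble_mul' hβ0 x x (3/4)) (intble_mul' hβ0 x (3/4) 1),
        integral_piece' hβ0 x x (3/4) h1.le (-4)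
          (fun s hs => by rw [gpl, if_neg (by linarith [hs.1]), if_pos hs.2]),
        integral_piece' hβ0 x (3/4) 1 (by norm_num) 4
          (fun s hs => by rw [gpl, if_neg (by linarith [hs.1]), if_neg (by linarith [hs.1])])]
      rw [show (1:ℝ) - x - 1/4 = 3/4 - x by ring, show (1:ℝ) - x - 3/4 = 1/4 - x by ring,
        max_eq_left (by linarith), max_eq_right (by linarith),
        sub_self, Real.zero_rpow hβ]
      ring
    · rw [← integral_add_adjacent_intervals (intble_mul' hβ0 x x (1/4)) (intble_mul' hβ0 x (1/4) 1),
        ← integral_add_adjacent_intervals (intble_mul' hβ0 x (1/4) (3/4)) (intble_mul' hβ0 x (3/4) 1),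
        integral_piece' hβ0 x x (1/4) h2.le 4 (fun s hs => if_pos hs.2),
        integral_piece' hβ0 x (1/4) (3/4) (by norm_num) (-4)
          (fun s hs => by rw [gpl, if_neg (by linarith [hs.1]), if_pos hs.2]),
        integral_piece' hβ0 x (3/4) 1 (by norm_num) 4
          (fun s hs => by rw [gpl, if_neg (by linarith [hs.1]), if_neg (by linarith [hs.1])])]
      rw [show (1:ℝ) - x - 1/4 = 3/4 - x by ring, show (1:ℝ) - x - 3/4 = 1/4 - x by ring,
        max_eq_left (by linarith), max_eq_left (by linarith),
        sub_self, Real.zero_rpow hβ]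
      ring

lemma Phi_cont {β : ℝ} (hβ0 : 0 < β) : Continuous (Phi β) := by
  have h : Continuous fun t : ℝ => t ^ β := Real.continuous_rpow_const hβ0.le
  unfold Phi
  exact continuous_const.mul (((h.sub (continuous_const.mul (h.comp
    ((continuous_id.sub continuous_const).max continuous_const)))).add
    (continuous_const.mul (h.comp
    ((continuous_id.sub continuous_const).max continuous_const)))))

lemma concave_key {β : ℝ} (hβ0 : 0 < β) (hβ1 : β < 1) :
    (1/4:ℝ) ^ β + (3/4:ℝ) ^ β < 2 * (1/2:ℝ) ^ β := by
  have h := (Real.strictConcaveOn_rpow hβ0 hβ1).2 (mem_Ici.2 (by norm_num : (0:ℝ) ≤ 1/4))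
    (mem_Ici.2 (by norm_num : (0:ℝ) ≤ 3/4)) (by norm_num)
    (by norm_num : (0:ℝ) < 1/2) (by norm_num : (0:ℝ) < 1/2) (by norm_num)
  simp only [smul_eq_mul] at h
  norm_num at h
  linarith

lemma Phi_sum_neg {β : ℝ} (hβ0 : 0 < β) (hβ1 : β < 1) :
    Phi β (1/4) + Phi β (3/4) < 0 := by
  have hΓ := Real.Gamma_pos_of_pos hβ0
  have hβ : β ≠ 0 := ne_of_gt hβ0
  have hc : 0 < 4 / (β * Real.Gamma β) := by positivity
  have e1 : Phi β (1/4) = (4 / (β * Real.Gamma β)) * (1/4:ℝ) ^ β := by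
    unfold Phi
    rw [show (1/4:ℝ) - 1/4 = 0 by norm_num, show (1/4:ℝ) - 3/4 = -(1/2) by norm_num,
      max_self, max_eq_right (by norm_num : (-(1/2):ℝ) ≤ 0), Real.zero_rpow hβ]
    ring
  have e2 : Phi β (3/4) = (4 / (β * Real.Gamma β)) * ((3/4:ℝ) ^ β - 2 * (1/2:ℝ) ^ β) := by
    unfold Phi
    rw [show (3/4:ℝ) - 1/4 = 1/2 by norm_num, show (3/4:ℝ) - 3/4 = 0 by norm_num,
      max_self, max_eq_left (by norm_num : (0:ℝ) ≤ 1/2), Real.zero_rpow hβ]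
    ring
  rw [e1, e2, ← mul_add]
  apply mul_neg_of_pos_of_neg hc
  have := concave_key hβ0 hβ1
  linarith

lemma integrableOn_mul_gpl {f : ℝ → ℝ} {s : Set ℝ} (hf : IntegrableOn f s volume) :
    IntegrableOn (fun x => f x * gpl x) s volume := by
  have h : (fun x => f x * gpl x) = fun x => gpl x * f x := funext fun x => mul_comm _ _
  rw [h]
  exact hf.bdd_mul gpl_measurable.aestronglyMeasurable (ae_of_all _ gpl_norm)

/-- Loss of coercivity of the Galerkin bilinear form for variable coefficients:
for every `0 < β < 1` and `θ ∈ [0,1]` there is a measurable diffusivity `K`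
bounded between positive constants such that `B(w,w) < 0` for the explicit
piecewise-linear function `w` with a.e. derivative `gpl`. -/
theorem galerkin_form_not_coercive (β θ : ℝ) (hβ0 : 0 < β) (hβ1 : β < 1)
    (hθ : θ ∈ Icc (0:ℝ) 1) :
    ∃ K : ℝ → ℝ, ∃ Km KM : ℝ, Measurable K ∧ 0 < Km ∧ Km ≤ KM ∧
      (∀ x ∈ Ioo (0:ℝ) 1, Km ≤ K x ∧ K x ≤ KM) ∧
      (∫ x in (0:ℝ)..1,
        K x * (θ * Il 0 β gpl x + (1 - θ) * Ir 1 β gpl x) * gpl x) < 0 := by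
  obtain ⟨F, hFc, hFeq⟩ : ∃ F : ℝ → ℝ, Continuous F ∧
      ∀ x, F x = θ * Phi β x + (1 - θ) * Phi β (1 - x) :=
    ⟨_, ((continuous_const.mul (Phi_cont hβ0)).add
      (continuous_const.mul ((Phi_cont hβ0).comp (continuous_const.sub continuous_id)))),
      fun _ => rfl⟩
  -- one of F(1/4), F(3/4) is negative
  have hsum : F (1/4) + F (3/4) < 0 := by
    have h := Phi_sum_neg hβ0 hβ1
    rw [hFeq, hFeq, show (1:ℝ) - 1/4 = 3/4 by norm_num, show (1:ℝ) - 3/4 = 1/4 by norm_num]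
    have hring : θ * Phi β (1/4) + (1 - θ) * Phi β (3/4)
        + (θ * Phi β (3/4) + (1 - θ) * Phi β (1/4))
        = Phi β (1/4) + Phi β (3/4) := by ring
    linarith
  obtain ⟨x0, hx0cases, hFx0⟩ : ∃ x0 : ℝ, (x0 = 1/4 ∨ x0 = 3/4) ∧ F x0 < 0 := by
    by_cases h : F (1/4) < 0
    · exact ⟨1/4, Or.inl rfl, h⟩
    · exact ⟨3/4, Or.inr rfl, by push_neg at h; linarith⟩
  -- a small interval on which gpl = 4 and F ≤ F x0 / 2 < 0
  obtain ⟨δ, hδ, hball⟩ := Metric.continuousAt_iff.1 (hFc.continuousAt (x := x0))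
    (-F x0 / 2) (div_pos (by linarith) two_pos)
  have hnear : ∀ y : ℝ, |y - x0| < δ → F y ≤ F x0 / 2 := by
    intro y hy
    have := hball (by simpa [Real.dist_eq] using hy)
    rw [Real.dist_eq] at this
    have h2 := abs_lt.1 this
    linarith [h2.1, h2.2]
  obtain ⟨a, b, hab, hsub, hprop⟩ : ∃ a b : ℝ, a < b ∧ Ioo a b ⊆ Ioc (0:ℝ) 1 ∧
      ∀ y ∈ Ioo a b, gpl y = 4 ∧ F y ≤ F x0 / 2 := by
    have hm : 0 < min δ (1/8) := lt_min hδ (by norm_num)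
    have hml := min_le_left δ (1/8:ℝ)
    have hmr := min_le_right δ (1/8:ℝ)
    rcases hx0cases with h14 | h34
    · refine ⟨1/4 - min δ (1/8), 1/4, by linarith, ?_, ?_⟩
      · intro y hy
        simp only [mem_Ioo] at hy
        exact ⟨by linarith [hy.1], by linarith [hy.2]⟩
      · intro y hy
        simp only [mem_Ioo] at hy
        refine ⟨if_pos hy.2, hnear y ?_⟩
        rw [h14, abs_lt]
        exact ⟨by linarith [hy.1], by linarith [hy.2]⟩
    · refine ⟨3/4, 3/4 + min δ (1/8), by linarith, ?_, ?_⟩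
      · intro y hy
        simp only [mem_Ioo] at hy
        exact ⟨by linarith [hy.1], by linarith [hy.2]⟩
      · intro y hy
        simp only [mem_Ioo] at hy
        have hy1 : ¬ (y < 1/4) := by linarith [hy.1]
        have hy2 : ¬ (y < 3/4) := by linarith [hy.1]
        refine ⟨by rw [gpl, if_neg hy1, if_neg hy2], hnear y ?_⟩
        rw [h34, abs_lt]
        exact ⟨by linarith [hy.1], by linarith [hy.2]⟩
  -- integrability
  have hFg : IntegrableOn (fun x => F x * gpl x) (Ioc 0 1) volume :=
    integrableOn_mul_gpl (hFc.integrableOn_Ioc)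
  have hJint : IntegrableOn (fun x => F x * gpl x) (Ioo a b) volume :=
    hFg.mono_set hsub
  set J : ℝ := ∫ x in Ioo a b, F x * gpl x with hJdef
  have hJle : J ≤ 2 * F x0 * (b - a) := by
    have hconst : IntegrableOn (fun _ : ℝ => 2 * F x0) (Ioo a b) volume :=
      integrableOn_const measure_Ioo_lt_top.ne
    have hmono := setIntegral_mono_on hJint hconst measurableSet_Ioo (fun y hy => by
      obtain ⟨hg4, hFy⟩ := hprop y hy
      rw [hg4]
      linarith)
    calc J ≤ ∫ _ in Ioo a b, 2 * F x0 := hmono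
      _ = 2 * F x0 * (b - a) := by
        rw [setIntegral_const, Real.volume_real_Ioo_of_le hab.le, smul_eq_mul]
        ring
  have hJneg : J < 0 :=
    lt_of_le_of_lt hJle (mul_neg_of_neg_of_pos (by linarith) (by linarith))
  set I0 : ℝ := ∫ x in Ioc (0:ℝ) 1, F x * gpl x with hI0def
  set M : ℝ := (|I0| + 1) / (-J) with hMdef
  have hM : 0 ≤ M := div_nonneg (by positivity) (by linarith)
  have hMJ : M * J = -(|I0| + 1) := by
    rw [hMdef, div_mul_eq_mul_div, mul_div_assoc, div_neg, div_self (ne_of_lt hJneg), mul_neg,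
      mul_one]
  refine ⟨fun x => 1 + M * (Ioo a b).indicator (fun _ => (1:ℝ)) x, 1, 1 + M, ?_, one_pos,
    by linarith, ?_, ?_⟩
  · exact measurable_const.add
      (measurable_const.mul (measurable_const.indicator measurableSet_Ioo))
  · intro x _
    have hind : (Ioo a b).indicator (fun _ => (1:ℝ)) x = 0 ∨
        (Ioo a b).indicator (fun _ => (1:ℝ)) x = 1 := by
      by_cases hx : x ∈ Ioo a b
      · exact Or.inr (indicator_of_mem hx _)
      · exact Or.inl (indicator_of_notMem hx _)
    rcases hind with h | h <;> simp only [h] <;> constructor <;> simp <;> linarith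
  · have step1 : (∫ x in (0:ℝ)..1,
        (1 + M * (Ioo a b).indicator (fun _ => (1:ℝ)) x) *
          (θ * Il 0 β gpl x + (1 - θ) * Ir 1 β gpl x) * gpl x)
        = ∫ x in (0:ℝ)..1,
        (1 + M * (Ioo a b).indicator (fun _ => (1:ℝ)) x) * F x * gpl x := by
      refine intervalIntegral.integral_congr fun x hx => ?_
      rw [uIcc_of_le (by norm_num : (0:ℝ) ≤ 1)] at hx
      rw [Il_eq hβ0 hx, Ir_eq hβ0 hx, hFeq]
    rw [step1, intervalIntegral.integral_of_le (by norm_num : (0:ℝ) ≤ 1)]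
    have step2 : ∀ x : ℝ, (1 + M * (Ioo a b).indicator (fun _ => (1:ℝ)) x) * F x * gpl x
        = F x * gpl x + M * (Ioo a b).indicator (fun y => F y * gpl y) x := by
      intro x
      by_cases hx : x ∈ Ioo a b
      · rw [indicator_of_mem hx, indicator_of_mem hx]; ring
      · rw [indicator_of_notMem hx, indicator_of_notMem hx]; ring
    simp only [step2]
    rw [integral_add hFg ((hJint.integrable_indicator measurableSet_Ioo).integrableOn.const_mul M),
      MeasureTheory.integral_const_mul, setIntegral_indicator measurableSet_Ioo,
      inter_eq_self_of_subset_right hsub]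
    rw [← hI0def, ← hJdef, hMJ]
    have := le_abs_self I0
    linarith
end
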